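/- Suppose the loss ℓ is (ν², α)-sub-exponential under P_W ⊗ μ for some ν, α > 0, i.e. log ∫ exp(λ·(ℓ − ∫ ℓ d(P_W ⊗ μ))) d(P_W ⊗ μ) ≤ λ²ν²/2 for every λ with |λ| < 1/α. If I(W;Z_i) ≤ ν²/(2α²) for all i ∈ {1,…,n}, then gen ≤ (1/n) ∑_{i=1}^n √(2ν²·I(W;Z_i)); if instead I(W;Z_i) > ν²/(2α²) for all i ∈ {1,…,n}, then gen ≤ ν²/(2α) + (α/n) ∑_{i=1}^n I(W;Z_i). -/

import Mathlib

open MeasureTheory Real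

open scoped ENNReal

section Aux
open Filter

lemma klReal_nonneg' {α : Type*} [MeasurableSpace α] (P Q : Measure α)
    [IsProbabilityMeasure P] [IsProbabilityMeasure Q] (h : P ≪ Q)
    (hint : Integrable (llr P Q) P) : 0 ≤ ∫ x, llr P Q x ∂P := by
  set g : α → ℝ := fun x => ((P.rnDeriv Q x)⁻¹).toReal with hg_def
  have hg_meas : Measurable g := (P.measurable_rnDeriv Q).inv.ennreal_toReal
  have hlint : ∫⁻ x, (P.rnDeriv Q x)⁻¹ ∂P ≤ 1 := by
    rw [← lintegral_rnDeriv_mul (f := fun x => (P.rnDeriv Q x)⁻¹) h (P.measurable_rnDeriv Q).inv.aemeasurable]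
    calc ∫⁻ x, P.rnDeriv Q x * (P.rnDeriv Q x)⁻¹ ∂Q
        ≤ ∫⁻ _, 1 ∂Q := lintegral_mono fun x => ENNReal.mul_inv_le_one _
      _ = 1 := by simp
  have hae_lt : ∀ᵐ x ∂P, (P.rnDeriv Q x)⁻¹ < ⊤ := by
    filter_upwards [Measure.rnDeriv_pos h] with x hx
    exact ENNReal.inv_lt_top.mpr hx
  have hg_int : Integrable g P :=
    integrable_toReal_of_lintegral_ne_top ((P.measurable_rnDeriv Q).inv.aemeasurable)
      (lt_of_le_of_lt hlint ENNReal.one_lt_top).ne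
  have hgle : ∫ x, g x ∂P ≤ 1 := by
    rw [hg_def]
    rw [integral_toReal (f := fun x => (P.rnDeriv Q x)⁻¹) ((P.measurable_rnDeriv Q).inv.aemeasurable) hae_lt]
    calc (∫⁻ x, (P.rnDeriv Q x)⁻¹ ∂P).toReal ≤ (1 : ℝ≥0∞).toReal :=
      ENNReal.toReal_mono (by simp) hlint
      _ = 1 := by simp
  have hptw : ∀ᵐ x ∂P, -(llr P Q x) ≤ g x - 1 := by
    filter_upwards [Measure.rnDeriv_pos h, h.ae_le (Measure.rnDeriv_lt_top P Q)] with x hx hlt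
    have hf0 : 0 < (P.rnDeriv Q x).toReal := ENNReal.toReal_pos hx.ne' hlt.ne
    have hgx : g x = ((P.rnDeriv Q x).toReal)⁻¹ := ENNReal.toReal_inv _
    rw [llr_def, hgx, ← Real.log_inv]
    exact Real.log_le_sub_one_of_pos (inv_pos.2 hf0)
  have key := integral_mono_ae hint.neg (hg_int.sub (integrable_const 1)) hptw
  simp only [Pi.sub_apply, Pi.neg_apply] at key
  rw [integral_neg, integral_sub hg_int (integrable_const 1), integral_const] at key
  simp only [measure_univ, probReal_univ, ENNReal.toReal_one, smul_eq_mul, one_mul] at key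
  linarith

lemma dv' {α : Type*} [MeasurableSpace α] (P Q : Measure α)
    [IsProbabilityMeasure P] [IsProbabilityMeasure Q] (hPQ : P ≪ Q) (f : α → ℝ)
    (hf : Integrable f P) (hef : Integrable (fun x => Real.exp (f x)) Q)
    (hllr : Integrable (llr P Q) P) :
    ∫ x, f x ∂P ≤ (∫ x, llr P Q x ∂P) + Real.log (∫ x, Real.exp (f x) ∂Q) := by
  have ht : IsProbabilityMeasure (Q.tilted f) := isProbabilityMeasure_tilted hef
  have hPt : P ≪ Q.tilted f := hPQ.trans (absolutelyContinuous_tilted hef)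
  have hint_t : Integrable (llr P (Q.tilted f)) P :=
    integrable_llr_tilted_right hPQ hf hllr hef
  have h0 : 0 ≤ ∫ x, llr P (Q.tilted f) x ∂P := klReal_nonneg' P (Q.tilted f) hPt hint_t
  rw [integral_llr_tilted_right hPQ hf hef hllr] at h0
  linarith

lemma bound_closed {A I ν α : ℝ} (hα : 0 < α)
    (key : ∀ lam : ℝ, 0 < lam → lam < 1/α → A ≤ I/lam + lam*ν^2/2) :
    ∀ lam : ℝ, 0 < lam → lam ≤ 1/α → A ≤ I/lam + lam*ν^2/2 := by
  intro lam hl hle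
  rcases hle.lt_or_eq with hlt | heq
  · exact key lam hl hlt
  · have hcont : ContinuousAt (fun t : ℝ => I/t + t*ν^2/2) lam :=
      ((continuousAt_const.div continuousAt_id hl.ne').add
        ((continuousAt_id.mul continuousAt_const).div_const 2))
    have htend : Tendsto (fun t : ℝ => I/t + t*ν^2/2) (nhdsWithin lam (Set.Iio lam))
        (nhds (I/lam + lam*ν^2/2)) := hcont.continuousWithinAt.tendsto
    refine ge_of_tendsto htend ?_
    filter_upwards [Ioo_mem_nhdsLT_of_mem (Set.right_mem_Ioc.mpr hl)] with t ht
    exact key t ht.1 (heq ▸ ht.2)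

lemma bound_zero {A ν α : ℝ} (hα : 0 < α)
    (key : ∀ lam : ℝ, 0 < lam → lam < 1/α → A ≤ lam*ν^2/2) : A ≤ 0 := by
  have htend : Tendsto (fun t : ℝ => t*ν^2/2) (nhdsWithin 0 (Set.Ioi 0)) (nhds 0) := by
    have h : ContinuousAt (fun t : ℝ => t*ν^2/2) 0 :=
      (continuousAt_id.mul continuousAt_const).div_const 2
    simpa using h.continuousWithinAt.tendsto
  refine ge_of_tendsto htend ?_
  filter_upwards [Ioo_mem_nhdsGT_of_mem (Set.left_mem_Ico.mpr (by positivity : (0:ℝ) < 1/α))]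
    with t ht
  exact key t ht.1 ht.2

lemma bound_sqrt {A I ν α : ℝ} (hν : 0 < ν) (hα : 0 < α) (hI : 0 ≤ I)
    (hIle : I ≤ ν^2/(2*α^2))
    (key : ∀ lam : ℝ, 0 < lam → lam < 1/α → A ≤ I/lam + lam*ν^2/2) :
    A ≤ Real.sqrt (2*ν^2*I) := by
  rcases hI.lt_or_eq with hIpos | hI0
  · set s := Real.sqrt (2*I) with hs_def
    have hspos : 0 < s := Real.sqrt_pos.mpr (by linarith)
    have hs2 : s^2 = 2*I := Real.sq_sqrt (by linarith)
    have hlam_pos : 0 < s/ν := div_pos hspos hν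
    have hlam_le : s/ν ≤ 1/α := by
      have h2a : 2*I ≤ ν^2/α^2 := by
        rw [le_div_iff₀ (by positivity)] at hIle ⊢
        nlinarith
      have h1 : s ≤ ν/α := by
        have h2b : (2*I) ≤ (ν/α)^2 := by rw [div_pow]; exact h2a
        calc s ≤ Real.sqrt ((ν/α)^2) := Real.sqrt_le_sqrt h2b
          _ = ν/α := Real.sqrt_sq (by positivity)
      rw [div_le_div_iff₀ hν hα, one_mul]
      exact (le_div_iff₀ hα).mp h1
    have hkey := bound_closed hα key (s/ν) hlam_pos hlam_le
    have heq : I/(s/ν) + (s/ν)*ν^2/2 = Real.sqrt (2*ν^2*I) := by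
      have hsq : Real.sqrt (2*ν^2*I) = ν * s := by
        rw [show 2*ν^2*I = ν^2*(2*I) by ring, Real.sqrt_mul (sq_nonneg ν),
          Real.sqrt_sq hν.le]
      rw [hsq]
      field_simp
      nlinarith [hs2]
    linarith [heq ▸ hkey]
  · refine le_trans (bound_zero (ν := ν) hα ?_) ?_
    · intro lam h1 h2
      have := key lam h1 h2
      rwa [← hI0, zero_div, zero_add] at this
    · positivity

end Aux


/-- Real-valued Kullback–Leibler divergence `D(P‖Q)`,
the integral of the log-likelihood ratio with respect to `P`. -/
noncomputable def klReal {α : Type*} [MeasurableSpace α] (P Q : Measure α) : ℝ :=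
  ∫ x, llr P Q x ∂P

variable {W Z : Type*} [MeasurableSpace W] [MeasurableSpace Z]

/-- Population risk `L(w) = ∫ ℓ(w,z) dμ(z)`. -/
noncomputable def popRisk (μ : Measure Z) (ℓ : W × Z → ℝ) (w : W) : ℝ :=
  ∫ z, ℓ (w, z) ∂μ

/-- Empirical risk `L̂(w,s) = (1/n) ∑ i, ℓ(w, s i)`. -/
noncomputable def empRisk (n : ℕ) (ℓ : W × Z → ℝ) (w : W) (s : Fin n → Z) : ℝ :=
  (1 / (n : ℝ)) * ∑ i, ℓ (w, s i)

/-- Expected generalization error `gen = E_P[L(W) − L̂(W,S_n)]`. -/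
noncomputable def genErr (μ : Measure Z) (n : ℕ) (P : Measure (W × (Fin n → Z)))
    (ℓ : W × Z → ℝ) : ℝ :=
  ∫ p, (popRisk μ ℓ p.1 - empRisk n ℓ p.1 p.2) ∂P

/-- Expected empirical excess risk `R̂ = E_P[L̂(W,S_n) − L̂(w*,S_n)]`. -/
noncomputable def empExcess (n : ℕ) (P : Measure (W × (Fin n → Z)))
    (ℓ : W × Z → ℝ) (wstar : W) : ℝ :=
  ∫ p, (empRisk n ℓ p.1 p.2 - empRisk n ℓ wstar p.2) ∂P

/-- Expected excess risk `R = ∫ r d(P_W ⊗ μ)` where `r(w,z) = ℓ(w,z) − ℓ(w*,z)`. -/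
noncomputable def excessRisk (μ : Measure Z) {n : ℕ} (P : Measure (W × (Fin n → Z)))
    (ℓ : W × Z → ℝ) (wstar : W) : ℝ :=
  ∫ p, (ℓ p - ℓ (wstar, p.2)) ∂((P.map Prod.fst).prod μ)

/-- Joint law `P_i` of `(W, Z_i)`: the pushforward of `P` under `(w,z) ↦ (w, z_i)`. -/
noncomputable def jointLaw {n : ℕ} (P : Measure (W × (Fin n → Z))) (i : Fin n) :
    Measure (W × Z) :=
  P.map fun p => (p.1, p.2 i)

/-- Mutual information `I(W;Z_i) = D(P_i ‖ P_W ⊗ μ)`. -/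
noncomputable def mutInfo (μ : Measure Z) {n : ℕ} (P : Measure (W × (Fin n → Z)))
    (i : Fin n) : ℝ :=
  klReal (jointLaw P i) ((P.map Prod.fst).prod μ)

theorem subexponential_loss_bound
    (μ : Measure Z) [IsProbabilityMeasure μ] (n : ℕ) (hn : 0 < n)
    (P : Measure (W × (Fin n → Z))) [IsProbabilityMeasure P]
    (hmarg : P.map Prod.snd = Measure.pi fun _ : Fin n => μ)
    (ℓ : W × Z → ℝ) (hℓ : Measurable ℓ) (wstar : W)
    (hint : Integrable ℓ ((P.map Prod.fst).prod μ))
    (hinti : ∀ i : Fin n, Integrable ℓ (jointLaw P i))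
    (hintw : Integrable (fun z => ℓ (wstar, z)) μ)
    (hac : ∀ i : Fin n, jointLaw P i ≪ (P.map Prod.fst).prod μ)
    (hIfin : ∀ i : Fin n, Integrable (llr (jointLaw P i) ((P.map Prod.fst).prod μ))
      (jointLaw P i))
    (ν α : ℝ) (hν : 0 < ν) (hα : 0 < α)
    (hsubInt : ∀ lam : ℝ, |lam| < 1 / α →
      Integrable
        (fun p => Real.exp (lam * (ℓ p - ∫ q, ℓ q ∂((P.map Prod.fst).prod μ))))
        ((P.map Prod.fst).prod μ))
    (hsub : ∀ lam : ℝ, |lam| < 1 / α →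
      Real.log (∫ p, Real.exp (lam * (ℓ p - ∫ q, ℓ q ∂((P.map Prod.fst).prod μ)))
          ∂((P.map Prod.fst).prod μ)) ≤ lam ^ 2 * ν ^ 2 / 2) :
    ((∀ i : Fin n, mutInfo μ P i ≤ ν ^ 2 / (2 * α ^ 2)) →
      genErr μ n P ℓ ≤
        (1 / (n : ℝ)) * ∑ i : Fin n, Real.sqrt (2 * ν ^ 2 * mutInfo μ P i)) ∧
    ((∀ i : Fin n, ν ^ 2 / (2 * α ^ 2) < mutInfo μ P i) →
      genErr μ n P ℓ ≤
        ν ^ 2 / (2 * α) + (α / (n : ℝ)) * ∑ i : Fin n, mutInfo μ P i) := by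
  have hn' : (n : ℝ) ≠ 0 := Nat.cast_ne_zero.mpr hn.ne'
  haveI : IsProbabilityMeasure (P.map (Prod.fst : W × (Fin n → Z) → W)) :=
    Measure.isProbabilityMeasure_map measurable_fst.aemeasurable
  set Q : Measure (W × Z) := (P.map Prod.fst).prod μ with hQ_def
  haveI : IsProbabilityMeasure Q := by rw [hQ_def]; infer_instance
  have hmi : ∀ i : Fin n, Measurable (fun p : W × (Fin n → Z) => (p.1, p.2 i)) :=
    fun i => measurable_fst.prodMk ((measurable_pi_apply i).comp measurable_snd)
  haveI hPi : ∀ i : Fin n, IsProbabilityMeasure (jointLaw P i) := fun i => by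
    rw [jointLaw]; exact Measure.isProbabilityMeasure_map (hmi i).aemeasurable
  set c : ℝ := ∫ q, ℓ q ∂Q with hc_def
  have hmi_eq : ∀ i : Fin n, mutInfo μ P i = ∫ x, llr (jointLaw P i) Q x ∂(jointLaw P i) :=
    fun i => rfl
  have hInonneg : ∀ i : Fin n, 0 ≤ mutInfo μ P i := fun i => by
    rw [hmi_eq i]; exact klReal_nonneg' _ _ (hac i) (hIfin i)
  have h3 : ∀ i : Fin n, Integrable (fun p : W × (Fin n → Z) => ℓ (p.1, p.2 i)) P :=
    fun i => (integrable_map_measure hℓ.aestronglyMeasurable (hmi i).aemeasurable).mp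
      (hinti i)
  have hpop_meas : StronglyMeasurable (fun w : W => ∫ z, ℓ (w, z) ∂μ) :=
    hℓ.stronglyMeasurable.integral_prod_right'
  -- genErr decomposition
  have hgen : genErr μ n P ℓ
      = (1 / (n : ℝ)) * ∑ i : Fin n, (c - ∫ q, ℓ q ∂(jointLaw P i)) := by
    simp only [genErr, popRisk, empRisk]
    have hpopP : Integrable (fun p : W × (Fin n → Z) => ∫ z, ℓ (p.1, z) ∂μ) P := by
      have h1 : Integrable (fun w : W => ∫ z, ℓ (w, z) ∂μ) (P.map Prod.fst) :=
        hint.integral_prod_left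
      exact (integrable_map_measure hpop_meas.aestronglyMeasurable
        measurable_fst.aemeasurable).mp h1
    have hempP : Integrable
        (fun p : W × (Fin n → Z) => (1 / (n : ℝ)) * ∑ i, ℓ (p.1, p.2 i)) P :=
      (integrable_finset_sum _ (fun i _ => h3 i)).const_mul _
    rw [integral_sub hpopP hempP]
    have e1 : ∫ p : W × (Fin n → Z), ∫ z, ℓ (p.1, z) ∂μ ∂P = c := by
      rw [hc_def, hQ_def, integral_prod _ hint,
        ← integral_map measurable_fst.aemeasurable hpop_meas.aestronglyMeasurable]
    have e2 : ∫ p : W × (Fin n → Z), (1 / (n : ℝ)) * ∑ i, ℓ (p.1, p.2 i) ∂P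
        = (1 / (n : ℝ)) * ∑ i : Fin n, ∫ q, ℓ q ∂(jointLaw P i) := by
      rw [integral_const_mul, integral_finset_sum _ (fun i _ => h3 i)]
      congr 1
      refine Finset.sum_congr rfl fun i _ => ?_
      rw [jointLaw, integral_map (hmi i).aemeasurable hℓ.aestronglyMeasurable]
    rw [e1, e2, Finset.sum_sub_distrib, Finset.sum_const, Finset.card_univ,
      Fintype.card_fin, nsmul_eq_mul]
    field_simp
  -- per-i key bound
  have hkey : ∀ i : Fin n, ∀ lam : ℝ, 0 < lam → lam < 1/α →
      c - ∫ q, ℓ q ∂(jointLaw P i) ≤ mutInfo μ P i / lam + lam * ν^2/2 := by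
    intro i lam h1 h2
    have habs : |(-lam)| < 1 / α := by rwa [abs_neg, abs_of_pos h1]
    have hdv := dv' (jointLaw P i) Q (hac i) (fun q => -lam * (ℓ q - c))
      (((hinti i).sub (integrable_const c)).const_mul (-lam)) (hsubInt (-lam) habs)
      (hIfin i)
    have hl : ∫ q, -lam * (ℓ q - c) ∂(jointLaw P i)
        = lam * (c - ∫ q, ℓ q ∂(jointLaw P i)) := by
      rw [integral_const_mul, integral_sub (hinti i) (integrable_const c), integral_const]
      simp only [measure_univ, probReal_univ, ENNReal.toReal_one, smul_eq_mul, one_mul]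
      ring
    have hsub' := hsub (-lam) habs
    rw [hl, ← hmi_eq i] at hdv
    have hstep : lam * (c - ∫ q, ℓ q ∂(jointLaw P i))
        ≤ mutInfo μ P i + lam^2 * ν^2/2 := by
      have : (-lam)^2 = lam^2 := by ring
      rw [this] at hsub'
      linarith [hdv.trans (by linarith : mutInfo μ P i
        + Real.log (∫ x, Real.exp (-lam * (ℓ x - c)) ∂Q)
        ≤ mutInfo μ P i + lam^2 * ν^2/2)]
    have hEq : lam * (mutInfo μ P i / lam + lam * ν^2/2)
        = mutInfo μ P i + lam^2 * ν^2/2 := by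
      field_simp
    exact le_of_mul_le_mul_left (by rw [hEq]; exact hstep) h1
  constructor
  · intro hI
    rw [hgen]
    refine mul_le_mul_of_nonneg_left (Finset.sum_le_sum fun i _ => ?_) (by positivity)
    exact bound_sqrt hν hα (hInonneg i) (hI i) (hkey i)
  · intro _
    rw [hgen]
    have hper : ∀ i : Fin n, c - ∫ q, ℓ q ∂(jointLaw P i)
        ≤ ν^2/(2*α) + α * mutInfo μ P i := by
      intro i
      have hthis := bound_closed hα (hkey i) (1/α) (by positivity) le_rfl
      have heq2 : mutInfo μ P i / (1/α) + 1/α * ν^2/2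
          = ν^2/(2*α) + α * mutInfo μ P i := by field_simp; ring
      linarith [heq2 ▸ hthis]
    calc (1 / (n : ℝ)) * ∑ i : Fin n, (c - ∫ q, ℓ q ∂(jointLaw P i))
        ≤ (1 / (n : ℝ)) * ∑ i : Fin n, (ν^2/(2*α) + α * mutInfo μ P i) :=
          mul_le_mul_of_nonneg_left (Finset.sum_le_sum fun i _ => hper i) (by positivity)
      _ = ν ^ 2 / (2 * α) + (α / n) * ∑ i : Fin n, mutInfo μ P i := by
          rw [Finset.sum_add_distrib, Finset.sum_const, Finset.card_univ,
            Fintype.card_fin, nsmul_eq_mul, ← Finset.mul_sum]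
          field_simp
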